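/- arXiv:2402.14756 — 2 statements merged into one kernel-verified Lean document; each statement's English description precedes it below -/
import Mathlib

section
/- (Broad–narrow elementary lemma) Let K ≥ 2 and let (z_α)_{α∈𝒞_K} be complex numbers indexed by the K intervals of the partition 𝒞_K of [0,1] into intervals of length 1/K. Write α ∼ α′ if α and α′ are equal or adjacent. Then |∑_{α} z_α| ≤ 4 max_α |z_α| + K^{3/2} max_{α′ ≁ α″} |z_{α′} z_{α″}|^{1/2}. -/
open scoped NNReal

/-- **Broad–narrow elementary lemma.** Index the `K` intervals of the
partition of `[0,1]` into intervals of length `1/K` by `Fin K`; two intervals are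
neighbors iff their indices differ by at most `1`.  Then for any complex numbers
`z a`, `|∑ z a| ≤ 4 max |z a| + K^{3/2} max_{a ≁ b} |z a * z b|^{1/2}`. -/
theorem statement6 (K : ℕ) (hK : 2 ≤ K) (z : Fin K → ℂ) :
    ‖∑ a, z a‖₊ ≤
      4 * Finset.univ.sup (fun a => ‖z a‖₊) +
        (K : ℝ≥0) ^ ((3 : ℝ) / 2) *
          Finset.univ.sup (fun ab : Fin K × Fin K =>
            if ab.1.1 ≤ ab.2.1 + 1 ∧ ab.2.1 ≤ ab.1.1 + 1 then 0
            else (‖z ab.1‖₊ * ‖z ab.2‖₊) ^ ((1 : ℝ) / 2)) := by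
  have hK0 : 0 < K := by omega
  have hKne : (K : ℝ≥0) ≠ 0 := by positivity
  set M := Finset.univ.sup (fun a => ‖z a‖₊) with hM
  set B := Finset.univ.sup (fun ab : Fin K × Fin K =>
            if ab.1.1 ≤ ab.2.1 + 1 ∧ ab.2.1 ≤ ab.1.1 + 1 then 0
            else (‖z ab.1‖₊ * ‖z ab.2‖₊) ^ ((1 : ℝ) / 2)) with hB
  have hle : ∀ a : Fin K, ‖z a‖₊ ≤ M := fun a =>
    Finset.le_sup (f := fun a => ‖z a‖₊) (Finset.mem_univ a)
  obtain ⟨a0, -, ha0⟩ := Finset.exists_mem_eq_sup Finset.univ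
    ⟨⟨0, hK0⟩, Finset.mem_univ _⟩ (fun a => ‖z a‖₊)
  by_cases hcase : ∃ b : Fin K, ¬(b.1 ≤ a0.1 + 1 ∧ a0.1 ≤ b.1 + 1) ∧ M ≤ K * ‖z b‖₊
  · -- broad case: the whole sum is dominated by K^{3/2} B
    obtain ⟨b, hadj, hb⟩ := hcase
    have hBge : ((‖z b‖₊ * ‖z a0‖₊) ^ ((1:ℝ)/2)) ≤ B := by
      have := Finset.le_sup (f := fun ab : Fin K × Fin K =>
          if ab.1.1 ≤ ab.2.1 + 1 ∧ ab.2.1 ≤ ab.1.1 + 1 then 0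
          else (‖z ab.1‖₊ * ‖z ab.2‖₊) ^ ((1 : ℝ) / 2)) (Finset.mem_univ (b, a0))
      simpa [hB, if_neg hadj] using this
    have hsqrt : NNReal.sqrt (‖z b‖₊ * ‖z a0‖₊) ≤ B := by
      rwa [NNReal.sqrt_eq_rpow]
    -- M ≤ sqrt K * B
    have hMM : M * M ≤ (K : ℝ≥0) * (‖z b‖₊ * ‖z a0‖₊) := by
      calc M * M ≤ ((K : ℝ≥0) * ‖z b‖₊) * M := by
            exact mul_le_mul_left hb M
        _ = (K : ℝ≥0) * (‖z b‖₊ * M) := by ring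
        _ = (K : ℝ≥0) * (‖z b‖₊ * ‖z a0‖₊) := by rw [hM, ha0]
    have hMle : M ≤ NNReal.sqrt K * B := by
      have h1 : NNReal.sqrt (M * M) ≤ NNReal.sqrt ((K : ℝ≥0) * (‖z b‖₊ * ‖z a0‖₊)) :=
        NNReal.sqrt_le_sqrt.mpr hMM
      rw [NNReal.sqrt_mul_self, NNReal.sqrt_mul] at h1
      exact h1.trans (mul_le_mul_right hsqrt _)
    have hsum : ‖∑ a, z a‖₊ ≤ (K : ℝ≥0) * M := by
      calc ‖∑ a, z a‖₊ ≤ ∑ a, ‖z a‖₊ := nnnorm_sum_le _ _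
        _ ≤ Finset.univ.card • M := Finset.sum_le_card_nsmul _ _ _ (fun a _ => hle a)
        _ = (K : ℝ≥0) * M := by
            simp [Finset.card_univ, nsmul_eq_mul]
    have hK32 : (K : ℝ≥0) ^ ((3 : ℝ) / 2) = (K : ℝ≥0) * NNReal.sqrt K := by
      have h32 : (3:ℝ)/2 = 1 + 1/2 := by norm_num
      rw [h32, NNReal.rpow_add hKne, NNReal.rpow_one, NNReal.sqrt_eq_rpow]
    calc ‖∑ a, z a‖₊ ≤ (K : ℝ≥0) * M := hsum
      _ ≤ (K : ℝ≥0) * (NNReal.sqrt K * B) := mul_le_mul_right hMle _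
      _ = (K : ℝ≥0) ^ ((3 : ℝ) / 2) * B := by rw [hK32, mul_assoc]
      _ ≤ 4 * M + (K : ℝ≥0) ^ ((3 : ℝ) / 2) * B := le_add_self
  · -- narrow case: all terms nonadjacent to a0 are tiny
    push_neg at hcase
    set S : Finset (Fin K) :=
      Finset.univ.filter (fun b => b.1 ≤ a0.1 + 1 ∧ a0.1 ≤ b.1 + 1) with hS
    have hcard : S.card ≤ 3 := by
      have hinj : Set.InjOn Fin.val (S : Set (Fin K)) :=
        Fin.val_injective.injOn
      have hmaps : ∀ b ∈ S, b.1 ∈ Finset.Icc (a0.1 - 1) (a0.1 + 1) := by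
        intro b hb
        rw [hS, Finset.mem_filter] at hb
        rw [Finset.mem_Icc]
        omega
      have := Finset.card_le_card_of_injOn Fin.val hmaps hinj
      have hIcc : (Finset.Icc (a0.1 - 1) (a0.1 + 1)).card ≤ 3 := by
        rw [Nat.card_Icc]; omega
      omega
    have hsplit : (∑ a, z a) = (∑ a ∈ S, z a) + ∑ a ∈ Sᶜ, z a := by
      rw [hS, Finset.compl_filter]
      exact (Finset.sum_filter_add_sum_filter_not _ _ _).symm
    have h1 : ‖∑ a ∈ S, z a‖₊ ≤ 3 * M := by
      calc ‖∑ a ∈ S, z a‖₊ ≤ ∑ a ∈ S, ‖z a‖₊ := nnnorm_sum_le _ _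
        _ ≤ S.card • M := Finset.sum_le_card_nsmul _ _ _ (fun a _ => hle a)
        _ = (S.card : ℝ≥0) * M := by rw [nsmul_eq_mul]
        _ ≤ 3 * M := by
            refine mul_le_mul_left ?_ M
            exact_mod_cast Nat.cast_le.mpr hcard
    have h2 : ‖∑ a ∈ Sᶜ, z a‖₊ ≤ M := by
      have hsmall : ∀ a ∈ Sᶜ, ‖z a‖₊ ≤ M / K := by
        intro a ha
        rw [Finset.mem_compl, hS, Finset.mem_filter] at ha
        simp only [Finset.mem_univ, true_and] at ha
        have := (hcase a (by omega)).le
        rw [le_div_iff₀ (hKne.bot_lt), mul_comm]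
        exact this
      calc ‖∑ a ∈ Sᶜ, z a‖₊ ≤ ∑ a ∈ Sᶜ, ‖z a‖₊ := nnnorm_sum_le _ _
        _ ≤ Sᶜ.card • (M / K) := Finset.sum_le_card_nsmul _ _ _ hsmall
        _ = (Sᶜ.card : ℝ≥0) * (M / K) := by rw [nsmul_eq_mul]
        _ ≤ (K : ℝ≥0) * (M / K) := by
            refine mul_le_mul_left ?_ _
            have : Sᶜ.card ≤ K := by
              calc Sᶜ.card ≤ Finset.univ.card := Finset.card_le_univ _
                _ = K := by simp
            exact_mod_cast Nat.cast_le.mpr this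
        _ = M := by
            rw [mul_comm, div_mul_cancel₀ _ hKne]
    calc ‖∑ a, z a‖₊ = ‖(∑ a ∈ S, z a) + ∑ a ∈ Sᶜ, z a‖₊ := by rw [hsplit]
      _ ≤ ‖∑ a ∈ S, z a‖₊ + ‖∑ a ∈ Sᶜ, z a‖₊ := nnnorm_add_le _ _
      _ ≤ 3 * M + M := add_le_add h1 h2
      _ = 4 * M := by ring
      _ ≤ 4 * M + (K : ℝ≥0) ^ ((3 : ℝ) / 2) * B := le_self_add
end

section
/- (Bootstrapping inequality forces trivial exponent) Suppose (D(n))_{n≥0} is a sequence of positive reals with D(n) ≤ 2^{n/2} for all n, and suppose there exist constants C_s (for each integer s ≥ 1) such that for all n: D(n) ≤ C_s · 2^{n/2^{s-1}} · 2^{nA(1 − (s+2)/2^{s+1})} whenever A > 0 satisfies D(m) ≤ C·2^{mA} for all m (with the same C absorbed into C_s). Then the infimum A₀ of all A > 0 for which D(n) ≲ 2^{nA} holds for all n must equal 0. -/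
/-- **Bootstrapping inequality forces trivial exponent.** Suppose
`D : ℕ → ℝ` is positive with `D n ≤ 2^{n/2}`, and suppose that for every `s ≥ 1`,
whenever `A > 0` satisfies `D m ≤ C · 2^{m A}` for all `m` (for some `C > 0`), there
is a constant `Cₛ` with
`D n ≤ Cₛ · 2^{n/2^{s−1}} · 2^{n A (1 − (s+2)/2^{s+1})}` for all `n`.  Then the
infimum of all `A > 0` for which `D n ≲ 2^{n A}` holds is `0`. -/
theorem statement17 (D : ℕ → ℝ) (hpos : ∀ n, 0 < D n)
    (htriv : ∀ n : ℕ, D n ≤ 2 ^ ((n : ℝ) / 2))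
    (hboot : ∀ s : ℕ, 1 ≤ s → ∀ A : ℝ, 0 < A → ∀ C : ℝ, 0 < C →
      (∀ m : ℕ, D m ≤ C * 2 ^ ((m : ℝ) * A)) →
      ∃ Cs : ℝ, 0 < Cs ∧ ∀ n : ℕ,
        D n ≤ Cs * 2 ^ ((n : ℝ) / 2 ^ ((s : ℝ) - 1)) *
          2 ^ ((n : ℝ) * A * (1 - ((s : ℝ) + 2) / 2 ^ ((s : ℝ) + 1)))) :
    sInf {A : ℝ | 0 < A ∧ ∃ C : ℝ, 0 < C ∧ ∀ n : ℕ, D n ≤ C * 2 ^ ((n : ℝ) * A)} = 0 := by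
  set S := {A : ℝ | 0 < A ∧ ∃ C : ℝ, 0 < C ∧ ∀ n : ℕ, D n ≤ C * 2 ^ ((n : ℝ) * A)} with hSdef
  have hhalf : (1/2 : ℝ) ∈ S := by
    refine ⟨by norm_num, 1, one_pos, fun n => ?_⟩
    rw [one_mul, show (n:ℝ) * (1/2) = (n:ℝ)/2 by ring]
    exact htriv n
  have hne : S.Nonempty := ⟨_, hhalf⟩
  have hbdd : BddBelow S := ⟨0, fun A hA => hA.1.le⟩
  have h0 : 0 ≤ sInf S := le_csInf hne fun A hA => hA.1.le
  by_contra hcon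
  have hA0 : 0 < sInf S := h0.lt_of_ne (Ne.symm hcon)
  set A0 := sInf S with hA0def
  obtain ⟨s, hs⟩ := exists_nat_gt (4 / A0)
  have hshalf : A0 ≤ 1/2 := csInf_le hbdd hhalf
  have hs1 : 1 ≤ s := by
    have h8 : (8:ℝ) ≤ 4 / A0 := by
      rw [le_div_iff₀ hA0]; linarith
    have : (1:ℝ) ≤ (s:ℝ) := by linarith
    exact_mod_cast this
  have hP : (0:ℝ) < 2 ^ ((s:ℝ)+1) := Real.rpow_pos_of_pos two_pos _
  have hEpos : (0:ℝ) < 2 ^ (1-(s:ℝ)) := Real.rpow_pos_of_pos two_pos _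
  set P := (2:ℝ) ^ ((s:ℝ)+1) with hPdef
  set E := (2:ℝ) ^ (1-(s:ℝ)) with hEdef
  have hEP : E * P = 4 := by
    rw [hEdef, hPdef, ← Real.rpow_add two_pos,
      show (1-(s:ℝ)) + ((s:ℝ)+1) = ((2:ℕ):ℝ) by push_cast; ring,
      Real.rpow_natCast]
    norm_num
  set θ := ((s:ℝ)+2)/P with hθdef
  have hθ0 : 0 < θ := by
    apply div_pos _ hP
    positivity
  have hθ1 : θ ≤ 1 := by
    rw [hθdef, div_le_one hP, hPdef,
      show ((s:ℝ)+1) = ((s+1:ℕ):ℝ) by push_cast; ring, Real.rpow_natCast]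
    have h1 : s + 1 < 2 ^ (s+1) := Nat.lt_two_pow_self
    have h2 : s + 2 ≤ 2 ^ (s+1) := h1
    exact_mod_cast h2
  set c := A0 * θ - E with hcdef
  have hθP : θ * P = (s:ℝ) + 2 := div_mul_cancel₀ _ hP.ne'
  have h4 : 4 < A0 * ((s:ℝ)+2) := by
    have h5 : 4 < A0 * (s:ℝ) := by
      have := (div_lt_iff₀ hA0).mp hs
      linarith
    nlinarith
  have hc : 0 < c := by
    have h1 : 0 < c * P := by
      have : c * P = A0 * ((s:ℝ)+2) - 4 := by
        rw [hcdef]; rw [sub_mul, mul_assoc, hθP, hEP]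
      rw [this]; linarith
    nlinarith
  obtain ⟨A, hAS, hAlt⟩ := exists_lt_of_csInf_lt hne (lt_add_of_pos_right A0 hc)
  obtain ⟨hApos, C, hC, hDC⟩ := hAS
  obtain ⟨Cs, hCs, hCsb⟩ := hboot s hs1 A hApos C hC hDC
  set A' := E + A * (1 - θ) with hA'def
  have hA'pos : 0 < A' := by
    have : 0 ≤ A * (1 - θ) := mul_nonneg hApos.le (by linarith)
    linarith
  have hA'S : A' ∈ S := by
    refine ⟨hA'pos, Cs, hCs, fun n => ?_⟩
    have h1 := hCsb n
    have hdiv : (n:ℝ) / 2 ^ ((s:ℝ)-1) = (n:ℝ) * E := by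
      rw [hEdef, show (1-(s:ℝ)) = -((s:ℝ)-1) by ring,
        Real.rpow_neg (by norm_num : (0:ℝ) ≤ 2)]
      ring
    calc D n ≤ Cs * 2 ^ ((n:ℝ) / 2 ^ ((s:ℝ)-1)) * 2 ^ ((n:ℝ) * A * (1 - θ)) := h1
      _ = Cs * 2 ^ ((n:ℝ) * A') := by
          rw [mul_assoc, ← Real.rpow_add two_pos, hdiv, hA'def]
          ring_nf
  have hle : A0 ≤ A' := csInf_le hbdd hA'S
  have hlt : A' < A0 := by
    have hkey : A * (1 - θ) ≤ (A0 + c) * (1 - θ) :=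
      mul_le_mul_of_nonneg_right hAlt.le (by linarith)
    have hEeq : E = A0 * θ - c := by rw [hcdef]; ring
    nlinarith [mul_pos hc hθ0]
  linarith
end
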